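/- arXiv:0811.1969 — 4 statements merged into one kernel-verified Lean document; each statement's English description precedes it below -/
import Mathlib

section
/- Let T : V → W be a linear map between finite-dimensional complex inner product spaces, and for t ≥ 1 let e_t denote the orthogonal projection onto the graph of tT. Then as t → ∞, e_t converges in operator norm to the block projection [[P_ker T, 0], [0, 1 − P_ker T*]], where P_ker T and P_ker T* are orthogonal projections onto ker T and ker T*. -/
variable {V W : Type*}
  [NormedAddCommGroup V] [InnerProductSpace ℂ V] [FiniteDimensional ℂ V]
  [NormedAddCommGroup W] [InnerProductSpace ℂ W] [FiniteDimensional ℂ W]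

/-- The graph projection of `T`, as a linear map on `V × W`, given by the block matrix
`[[(1+T*T)⁻¹, T*(1+TT*)⁻¹], [T(1+T*T)⁻¹, 1-(1+TT*)⁻¹]]`. -/
noncomputable def gproj (T : V →ₗ[ℂ] W) : (V × W) →ₗ[ℂ] (V × W) :=
  let A : V →ₗ[ℂ] V := Ring.inverse ((1 : Module.End ℂ V) + LinearMap.adjoint T ∘ₗ T)
  let C : W →ₗ[ℂ] W := Ring.inverse ((1 : Module.End ℂ W) + T ∘ₗ LinearMap.adjoint T)
  LinearMap.prod
    ((A ∘ₗ LinearMap.fst ℂ V W) + ((LinearMap.adjoint T ∘ₗ C) ∘ₗ LinearMap.snd ℂ V W))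
    (((T ∘ₗ A) ∘ₗ LinearMap.fst ℂ V W) + ((LinearMap.id - C) ∘ₗ LinearMap.snd ℂ V W))

/-- The orthogonal projection onto the kernel of `T`, as a linear endomorphism of `V`. -/
noncomputable def kerProj (T : V →ₗ[ℂ] W) : V →ₗ[ℂ] V :=
  (LinearMap.ker T).subtype ∘ₗ (Submodule.orthogonalProjection (LinearMap.ker T)).toLinearMap

set_option maxHeartbeats 1000000 in
set_option synthInstance.maxHeartbeats 200000 in
open LinearMap in
theorem key (T : V →ₗ[ℂ] W) :
    ∃ c : ℝ, 0 ≤ c ∧ ∀ t : ℝ, 1 ≤ t → ∀ x : V,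
      ‖Ring.inverse ((1 : Module.End ℂ V) + ((t:ℂ)^2) • (adjoint T ∘ₗ T)) x - kerProj T x‖
          ≤ c / t * ‖x‖ ∧
      t * ‖T (Ring.inverse ((1 : Module.End ℂ V) + ((t:ℂ)^2) • (adjoint T ∘ₗ T)) x)‖
          ≤ c / t * ‖x‖ := by
  set S : Module.End ℂ V := adjoint T ∘ₗ T with hS
  have hSapp : ∀ z, S z = adjoint T (T z) := fun z => rfl
  have hinner : ∀ z : V, (inner ℂ (S z) z : ℂ) = ((‖T z‖:ℝ):ℂ)^2 := by
    intro z
    rw [hSapp, adjoint_inner_left, inner_self_eq_norm_sq_to_K]; rfl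
  -- kernel of S
  have hkerS : ∀ z, S z = 0 → T z = 0 := by
    intro z hz
    have h := hinner z
    rw [hz, inner_zero_left] at h
    have : (‖T z‖:ℝ) = 0 := by
      have := h.symm
      push_cast at this
      exact_mod_cast pow_eq_zero_iff (n := 2) (by norm_num) |>.mp (by exact_mod_cast this)
    simpa [norm_eq_zero] using this
  -- S z in U
  set U : Submodule ℂ V := (LinearMap.ker T)ᗮ with hU
  have hSU : ∀ z, S z ∈ U := by
    intro z
    rw [hU, Submodule.mem_orthogonal]
    intro k hk
    rw [hSapp, adjoint_inner_right, LinearMap.mem_ker.mp hk, inner_zero_left]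
  -- restriction of S to U
  set F : U →ₗ[ℂ] U := S.restrict (fun z _ => hSU z) with hF
  have hFcoe : ∀ z : U, (F z : V) = S z := fun z => rfl
  have hFinj : Function.Injective F := by
    rw [← LinearMap.ker_eq_bot, LinearMap.ker_eq_bot']
    intro m hm
    have h1 : S (m : V) = 0 := by
      have := congrArg (Subtype.val) hm
      simpa [hFcoe] using this
    have h2 : (m : V) ∈ LinearMap.ker T := LinearMap.mem_ker.mpr (hkerS _ h1)
    have := (Submodule.mem_orthogonal (LinearMap.ker T) (m : V)).mp m.2 _ h2
    rw [inner_self_eq_zero] at this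
    exact Subtype.ext this
  have hFsurj : Function.Surjective F := LinearMap.injective_iff_surjective.mp hFinj
  set E := LinearEquiv.ofBijective F ⟨hFinj, hFsurj⟩ with hE
  set B : V →ₗ[ℂ] V :=
    U.subtype ∘ₗ (E.symm : U →ₗ[ℂ] U) ∘ₗ (Submodule.orthogonalProjection U).toLinearMap with hB
  have hSB : ∀ y, y ∈ U → S (B y) = y := by
    intro y hy
    have hproj : Submodule.orthogonalProjection U y = ⟨y, hy⟩ :=
      Subtype.ext (Submodule.starProjection_eq_self_iff.mpr hy)
    have : B y = ((E.symm ⟨y, hy⟩ : U) : V) := by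
      simp [hB, hproj]
    rw [this]
    have : S ((E.symm ⟨y, hy⟩ : U) : V) = ((F (E.symm ⟨y, hy⟩) : U) : V) := rfl
    rw [this]
    have : F (E.symm ⟨y, hy⟩) = E (E.symm ⟨y, hy⟩) := rfl
    rw [this, LinearEquiv.apply_symm_apply]
  -- constants
  set cB : ℝ := ‖B.toContinuousLinearMap‖ with hcBdef
  have hcB : 0 ≤ cB := norm_nonneg _
  have hBle : ∀ z, ‖B z‖ ≤ cB * ‖z‖ := fun z => by
    simpa using B.toContinuousLinearMap.le_opNorm z
  set cT : ℝ := ‖T.toContinuousLinearMap‖ with hcTdef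
  have hcT : 0 ≤ cT := norm_nonneg _
  have hTle : ∀ z, ‖T z‖ ≤ cT * ‖z‖ := fun z => by
    have h := T.toContinuousLinearMap.le_opNorm z
    simpa only [LinearMap.coe_toContinuousLinearMap'] using h
  refine ⟨2 * cB * (1 + cT), by positivity, ?_⟩
  intro t ht x
  have ht0 : (0:ℝ) < t := lt_of_lt_of_le one_pos ht
  set u : ℂ := (t:ℂ)^2 with hudef
  set M : Module.End ℂ V := 1 + u • S with hMdef
  set A : Module.End ℂ V := Ring.inverse M with hAdef
  have hMapp : ∀ z, M z = z + u • S z := by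
    intro z; simp [hMdef, LinearMap.add_apply, LinearMap.smul_apply]
  have hself : ∀ z : V, (inner ℂ z z : ℂ) = ((‖z‖^2 : ℝ) : ℂ) := by
    intro z
    rw [inner_self_eq_norm_sq_to_K]
    push_cast
    rfl
  have hre : ∀ z, (inner ℂ (M z) z : ℂ).re = ‖z‖^2 + t^2 * ‖T z‖^2 := by
    intro z
    have hcu : (starRingEnd ℂ) u = u := by
      rw [hudef, map_pow, Complex.conj_ofReal]
    have hval : (inner ℂ (M z) z : ℂ) = ((‖z‖^2 + t^2 * ‖T z‖^2 : ℝ) : ℂ) := by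
      rw [hMapp, inner_add_left, inner_smul_left, hinner z, hself z, hcu, hudef]
      push_cast
      ring
    rw [hval, Complex.ofReal_re]
  have hMinj : Function.Injective M := by
    rw [← LinearMap.ker_eq_bot, LinearMap.ker_eq_bot']
    intro z hz
    have h := hre z
    rw [hz] at h
    simp only [inner_zero_left, Complex.zero_re] at h
    have hz0 : ‖z‖ = 0 := by nlinarith [norm_nonneg z, sq_nonneg (t * ‖T z‖), sq_nonneg ‖z‖]
    simpa using hz0
  have hMunit : IsUnit M :=
    (Module.End.isUnit_iff M).mpr ⟨hMinj, LinearMap.injective_iff_surjective.mp hMinj⟩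
  have hMA : ∀ z, M (A z) = z := by
    intro z
    have h : M * A = 1 := by rw [hAdef]; exact Ring.mul_inverse_cancel M hMunit
    simpa [Module.End.mul_apply] using DFunLike.congr_fun h z
  have hAM : ∀ z, A (M z) = z := by
    intro z
    have h : A * M = 1 := by rw [hAdef]; exact Ring.inverse_mul_cancel M hMunit
    simpa [Module.End.mul_apply] using DFunLike.congr_fun h z
  have hAle : ∀ z, ‖A z‖ ≤ ‖z‖ := by
    intro z
    have h1 : ‖A z‖^2 ≤ (inner ℂ (M (A z)) (A z) : ℂ).re := by
      rw [hre]; nlinarith [sq_nonneg (t * ‖T (A z)‖)]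
    rw [hMA] at h1
    have h2 : (inner ℂ z (A z) : ℂ).re ≤ ‖z‖ * ‖A z‖ := by
      simpa only [RCLike.re_to_complex] using re_inner_le_norm (𝕜 := ℂ) z (A z)
    nlinarith [norm_nonneg (A z), norm_nonneg z]
  have hPk : ∀ z, T (kerProj T z) = 0 := by
    intro z
    have : kerProj T z ∈ LinearMap.ker T :=
      Submodule.coe_mem (Submodule.orthogonalProjection (LinearMap.ker T) z)
    exact LinearMap.mem_ker.mp this
  have hAP : ∀ z, A (kerProj T z) = kerProj T z := by
    intro z
    have hM1 : M (kerProj T z) = kerProj T z := by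
      rw [hMapp, hSapp, hPk, map_zero, smul_zero, add_zero]
    conv_lhs => rw [← hM1]
    rw [hAM]
  set y := x - kerProj T x with hy
  have hyU : y ∈ U := Submodule.sub_starProjection_mem_orthogonal x
  have hyle : ‖y‖ ≤ ‖x‖ := by
    have horth : (inner ℂ (kerProj T x) y : ℂ) = 0 := by
      exact (Submodule.mem_orthogonal (LinearMap.ker T) y).mp hyU _
        (Submodule.coe_mem (Submodule.orthogonalProjection (LinearMap.ker T) x))
    have hsum : ‖x‖^2 = ‖kerProj T x‖^2 + ‖y‖^2 := by
      have hxeq : x = kerProj T x + y := by rw [hy]; abel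
      calc ‖x‖^2 = ‖kerProj T x + y‖^2 := by rw [← hxeq]
      _ = ‖kerProj T x‖^2 + 2 * (inner ℂ (kerProj T x) y : ℂ).re + ‖y‖^2 := by
          simpa only [RCLike.re_to_complex] using norm_add_sq (𝕜 := ℂ) (kerProj T x) y
      _ = ‖kerProj T x‖^2 + ‖y‖^2 := by rw [horth]; simp
    nlinarith [norm_nonneg x, norm_nonneg y, sq_nonneg ‖kerProj T x‖]
  have hkey : u • A y = B y - A (B y) := by
    have h1 := hAM (B y)
    rw [hMapp, hSB y hyU, map_add, map_smul] at h1
    rw [eq_sub_iff_add_eq, add_comm]; exact h1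
  have hAy : ‖A y‖ * t^2 ≤ 2 * cB * ‖x‖ := by
    have hnu : ‖u‖ = t^2 := by
      rw [hudef, norm_pow, Complex.norm_real, Real.norm_eq_abs, abs_of_pos ht0]
    have h2 : ‖A y‖ * t^2 = ‖u • A y‖ := by rw [norm_smul, hnu]; ring
    rw [h2, hkey]
    calc ‖B y - A (B y)‖ ≤ ‖B y‖ + ‖A (B y)‖ := norm_sub_le _ _
    _ ≤ ‖B y‖ + ‖B y‖ := by linarith [hAle (B y)]
    _ ≤ 2 * (cB * ‖y‖) := by linarith [hBle y]
    _ ≤ 2 * cB * ‖x‖ := by nlinarith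
  have hAxy : A x = A y + kerProj T x := by
    conv_lhs => rw [show x = y + kerProj T x from by rw [hy]; abel]
    rw [map_add, hAP]
  constructor
  · rw [div_mul_eq_mul_div, le_div_iff₀ ht0]
    have : ‖A x - kerProj T x‖ = ‖A y‖ := by rw [hAxy]; congr 1; abel
    rw [this]
    nlinarith [hAy, norm_nonneg (A y), norm_nonneg x, hcB, hcT,
      mul_nonneg (mul_nonneg (norm_nonneg (A y)) ht0.le) (sub_nonneg.mpr ht),
      mul_nonneg (mul_nonneg hcB hcT) (norm_nonneg x)]
  · rw [div_mul_eq_mul_div, le_div_iff₀ ht0]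
    have hTAx : T (A x) = T (A y) := by rw [hAxy, map_add, hPk, add_zero]
    rw [hTAx]
    have h6 : ‖T (A y)‖ ≤ cT * ‖A y‖ := hTle _
    have h7 : t * ‖T (A y)‖ * t ≤ cT * (‖A y‖ * t^2) := by
      nlinarith [mul_le_mul_of_nonneg_left h6 (sq_nonneg t)]
    have h8 : cT * (‖A y‖ * t^2) ≤ cT * (2 * cB * ‖x‖) :=
      mul_le_mul_of_nonneg_left hAy hcT
    nlinarith [mul_nonneg (mul_nonneg hcB hcT) (norm_nonneg x),
      mul_nonneg hcB (norm_nonneg x)]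

open LinearMap Filter in
set_option maxHeartbeats 4000000 in
set_option synthInstance.maxHeartbeats 400000 in
/-- As `t → ∞`, the graph projections of `tT` converge in operator norm to the block
projection `[[P_ker T, 0], [0, 1 − P_ker T*]]`. -/
theorem graph_projection_tendsto_kernel_projection (T : V →ₗ[ℂ] W) :
    Filter.Tendsto
      (fun t : ℝ => LinearMap.toContinuousLinearMap (gproj ((t : ℂ) • T)))
      Filter.atTop
      (nhds (LinearMap.toContinuousLinearMap (LinearMap.prod
        (kerProj T ∘ₗ LinearMap.fst ℂ V W)
        ((LinearMap.id - kerProj (LinearMap.adjoint T)) ∘ₗ LinearMap.snd ℂ V W)))) := by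
  obtain ⟨c1, hc1, H1⟩ := key T
  obtain ⟨c2, hc2, H2⟩ := key (LinearMap.adjoint T)
  simp only [adjoint_adjoint] at H2
  set L := LinearMap.toContinuousLinearMap (LinearMap.prod
        (kerProj T ∘ₗ LinearMap.fst ℂ V W)
        ((LinearMap.id - kerProj (LinearMap.adjoint T)) ∘ₗ LinearMap.snd ℂ V W)) with hL
  have main : Tendsto
      (fun t : ℝ => ‖LinearMap.toContinuousLinearMap (gproj ((t : ℂ) • T)) - L‖)
      atTop (nhds 0) := by
    refine squeeze_zero' (Filter.Eventually.of_forall fun t =>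
        norm_nonneg (LinearMap.toContinuousLinearMap (gproj ((t : ℂ) • T)) - L))
      ?_ ((tendsto_const_nhds (x := c1 + c2)).div_atTop tendsto_id)
    filter_upwards [eventually_ge_atTop (1:ℝ)] with t ht
    have ht0 : (0:ℝ) < t := lt_of_lt_of_le one_pos ht
    rw [← map_sub]
    refine ContinuousLinearMap.opNorm_le_bound _
      (div_nonneg (by linarith) ht0.le) ?_
    rintro ⟨x, y⟩
    have hadj : adjoint ((t:ℂ) • T) = (t:ℂ) • adjoint T := by
      rw [map_smulₛₗ, Complex.conj_ofReal]
    have hAeq : adjoint ((t:ℂ) • T) ∘ₗ ((t:ℂ) • T)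
        = (1 : Module.End ℂ V) • ((t:ℂ)^2 • (adjoint T ∘ₗ T)) := by
      rw [hadj, smul_comp, comp_smul, smul_smul, sq, one_smul]
    have hCeq : ((t:ℂ) • T) ∘ₗ adjoint ((t:ℂ) • T)
        = (1 : Module.End ℂ W) • ((t:ℂ)^2 • (T ∘ₗ adjoint T)) := by
      rw [hadj, smul_comp, comp_smul, smul_smul, sq, one_smul]
    rw [one_smul] at hAeq hCeq
    set A : Module.End ℂ V :=
      Ring.inverse ((1 : Module.End ℂ V) + (t:ℂ)^2 • (adjoint T ∘ₗ T)) with hAdef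
    set C : Module.End ℂ W :=
      Ring.inverse ((1 : Module.End ℂ W) + (t:ℂ)^2 • (T ∘ₗ adjoint T)) with hCdef
    have happ : ((gproj ((t:ℂ) • T) - LinearMap.prod
          (kerProj T ∘ₗ LinearMap.fst ℂ V W)
          ((LinearMap.id - kerProj (LinearMap.adjoint T)) ∘ₗ LinearMap.snd ℂ V W) :
            (V × W) →ₗ[ℂ] (V × W))) (x, y)
        = ((A x - kerProj T x) + (t:ℂ) • (adjoint T (C y)),
           (t:ℂ) • (T (A x)) + (kerProj (adjoint T) y - C y)) := by
      show (gproj ((t:ℂ) • T)) (x, y) - _ = _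
      simp only [gproj]
      simp only [LinearMap.prod_apply, Function.prod_apply, LinearMap.add_apply, LinearMap.comp_apply,
        LinearMap.fst_apply, LinearMap.snd_apply, LinearMap.sub_apply, LinearMap.id_apply,
        LinearMap.smul_apply, Prod.mk_sub_mk]
      rw [hAeq, hCeq, hadj, ← hAdef, ← hCdef, Prod.mk.injEq]
      refine ⟨?_, ?_⟩
      · rw [LinearMap.smul_apply]
        abel
      · try rw [LinearMap.smul_apply]
        abel
    have hnormt : ‖(t:ℂ)‖ = t := by
      rw [Complex.norm_real, Real.norm_eq_abs, abs_of_pos ht0]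
    have hb1 := (H1 t ht x).1
    have hb2 := (H1 t ht x).2
    have hb3 := (H2 t ht y).1
    have hb4 := (H2 t ht y).2
    have hxz : ‖x‖ ≤ ‖(x, y)‖ := norm_fst_le (x, y)
    have hyz : ‖y‖ ≤ ‖(x, y)‖ := norm_snd_le (x, y)
    have hbound1 : ‖(A x - kerProj T x) + (t:ℂ) • (adjoint T (C y))‖
        ≤ (c1 + c2) / t * ‖(x, y)‖ := by
      calc ‖(A x - kerProj T x) + (t:ℂ) • (adjoint T (C y))‖
          ≤ ‖A x - kerProj T x‖ + ‖(t:ℂ) • (adjoint T (C y))‖ := norm_add_le _ _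
        _ = ‖A x - kerProj T x‖ + t * ‖adjoint T (C y)‖ := by rw [norm_smul, hnormt]
        _ ≤ c1 / t * ‖x‖ + c2 / t * ‖y‖ := by linarith
        _ ≤ (c1 + c2) / t * ‖(x, y)‖ := by
            have h1 : c1 / t * ‖x‖ ≤ c1 / t * ‖(x, y)‖ :=
              mul_le_mul_of_nonneg_left hxz (div_nonneg hc1 ht0.le)
            have h2 : c2 / t * ‖y‖ ≤ c2 / t * ‖(x, y)‖ :=
              mul_le_mul_of_nonneg_left hyz (div_nonneg hc2 ht0.le)
            have : c1 / t * ‖(x, y)‖ + c2 / t * ‖(x, y)‖ = (c1 + c2) / t * ‖(x, y)‖ := by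
              ring
            linarith
    have hbound2 : ‖(t:ℂ) • (T (A x)) + (kerProj (adjoint T) y - C y)‖
        ≤ (c1 + c2) / t * ‖(x, y)‖ := by
      calc ‖(t:ℂ) • (T (A x)) + (kerProj (adjoint T) y - C y)‖
          ≤ ‖(t:ℂ) • (T (A x))‖ + ‖kerProj (adjoint T) y - C y‖ := norm_add_le _ _
        _ = t * ‖T (A x)‖ + ‖C y - kerProj (adjoint T) y‖ := by
            rw [norm_smul, hnormt, norm_sub_rev]
        _ ≤ c1 / t * ‖x‖ + c2 / t * ‖y‖ := by linarith
        _ ≤ (c1 + c2) / t * ‖(x, y)‖ := by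
            have h1 : c1 / t * ‖x‖ ≤ c1 / t * ‖(x, y)‖ :=
              mul_le_mul_of_nonneg_left hxz (div_nonneg hc1 ht0.le)
            have h2 : c2 / t * ‖y‖ ≤ c2 / t * ‖(x, y)‖ :=
              mul_le_mul_of_nonneg_left hyz (div_nonneg hc2 ht0.le)
            have : c1 / t * ‖(x, y)‖ + c2 / t * ‖(x, y)‖ = (c1 + c2) / t * ‖(x, y)‖ := by
              ring
            linarith
    calc ‖(LinearMap.toContinuousLinearMap (gproj ((t:ℂ) • T) - _)) (x, y)‖
        = ‖(gproj ((t:ℂ) • T) - _) (x, y)‖ := by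
          rw [LinearMap.coe_toContinuousLinearMap']
      _ ≤ (c1 + c2) / t * ‖(x, y)‖ := by
          rw [happ, Prod.norm_def]
          exact max_le hbound1 hbound2

  exact (tendsto_iff_norm_sub_tendsto_zero
    (f := fun t : ℝ => LinearMap.toContinuousLinearMap (gproj ((t : ℂ) • T)))
    (a := Filter.atTop) (b := L)).mpr main
end

section
/- Let T : V → W be an invertible linear map between finite-dimensional complex inner product spaces, and for s > 0 let e_s be the orthogonal projection onto the graph of sT. Then e_s → [[0,0],[0,1]] in operator norm as s → ∞. -/
variable {V W : Type*}
  [NormedAddCommGroup V] [InnerProductSpace ℂ V] [FiniteDimensional ℂ V]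
  [NormedAddCommGroup W] [InnerProductSpace ℂ W] [FiniteDimensional ℂ W]

open LinearMap in
lemma inv_bound' (S : V →ₗ[ℂ] W) {c : ℝ} (hc : 0 < c) (hS : ∀ x, c * ‖x‖ ≤ ‖S x‖) :
    IsUnit ((1 : Module.End ℂ V) + LinearMap.adjoint S ∘ₗ S) ∧
      ∀ v, c ^ 2 * ‖(Ring.inverse ((1 : Module.End ℂ V) + LinearMap.adjoint S ∘ₗ S)) v‖ ≤ ‖v‖ ∧
        c * ‖S ((Ring.inverse ((1 : Module.End ℂ V) + LinearMap.adjoint S ∘ₗ S)) v)‖ ≤ ‖v‖ := by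
  set Q : Module.End ℂ V := (1 : Module.End ℂ V) + LinearMap.adjoint S ∘ₗ S with hQ
  have hkey : ∀ a : V, Complex.re (inner ℂ (Q a) a) = ‖a‖ ^ 2 + ‖S a‖ ^ 2 := by
    intro a
    have : Q a = a + LinearMap.adjoint S (S a) := rfl
    rw [this, inner_add_left, LinearMap.adjoint_inner_left]
    simp [← RCLike.re_to_complex, inner_self_eq_norm_sq]
    norm_cast
  have hinj : Function.Injective Q := by
    intro a b hab
    have h0 : Q (a - b) = 0 := by simp [map_sub, hab]
    have := hkey (a - b)
    rw [h0] at this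
    simp only [inner_zero_left, Complex.zero_re] at this
    have ha : ‖a - b‖ ^ 2 = 0 := by nlinarith [sq_nonneg ‖S (a-b)‖, sq_nonneg ‖a-b‖]
    have h2 : a - b = 0 := by rwa [pow_eq_zero_iff two_ne_zero, norm_eq_zero] at ha
    exact sub_eq_zero.mp h2
  have hunit : IsUnit Q := (Module.End.isUnit_iff Q).mpr
    ⟨hinj, (LinearMap.injective_iff_surjective).mp hinj⟩
  refine ⟨hunit, fun v => ?_⟩
  set a := (Ring.inverse Q) v with hadef
  have hQa : Q a = v := by
    have := Ring.mul_inverse_cancel Q hunit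
    have := congrArg (fun f : Module.End ℂ V => f v) this
    simpa [Module.End.mul_apply] using this
  have h1 : ‖a‖ ^ 2 + ‖S a‖ ^ 2 ≤ ‖v‖ * ‖a‖ := by
    rw [← hkey a, hQa]
    calc Complex.re (inner ℂ v a : ℂ) ≤ ‖(inner ℂ v a : ℂ)‖ := Complex.re_le_norm _
      _ ≤ ‖v‖ * ‖a‖ := norm_inner_le_norm v a
  have h2 : (c * ‖a‖) ^ 2 ≤ ‖S a‖ ^ 2 :=
    pow_le_pow_left₀ (mul_nonneg hc.le (norm_nonneg a)) (hS a) 2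
  have ha0 : 0 ≤ ‖a‖ := norm_nonneg a
  have hv0 : 0 ≤ ‖v‖ := norm_nonneg v
  have hSa0 : 0 ≤ ‖S a‖ := norm_nonneg (S a)
  have hfirst : c ^ 2 * ‖a‖ ≤ ‖v‖ := by
    rcases eq_or_lt_of_le ha0 with h | h
    · rw [← h]; simpa using hv0
    · nlinarith
  refine ⟨hfirst, ?_⟩
  have hsq : (c * ‖S a‖) ^ 2 ≤ ‖v‖ ^ 2 := by
    nlinarith [mul_le_mul_of_nonneg_left h1 (sq_nonneg c),
      mul_le_mul_of_nonneg_left hfirst hv0, mul_nonneg (sq_nonneg c) (sq_nonneg ‖a‖)]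
  nlinarith [mul_nonneg hc.le hSa0, hv0]

open LinearMap in
lemma gproj_sub_bound (S : V →ₗ[ℂ] W) {c : ℝ} (hc : 0 < c)
    (h1 : ∀ x, c * ‖x‖ ≤ ‖S x‖) (h2 : ∀ y, c * ‖y‖ ≤ ‖LinearMap.adjoint S y‖) :
    ∀ x : V × W, ‖gproj S x - ((0 : V), x.2)‖ ≤ (c⁻¹ + c⁻¹ * c⁻¹) * ‖x‖ := by
  obtain ⟨-, hA⟩ := inv_bound' S hc h1
  obtain ⟨-, hC⟩ := inv_bound' (LinearMap.adjoint S) hc (by simpa using h2)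
  rw [LinearMap.adjoint_adjoint] at hC
  rintro ⟨v, w⟩
  set A : Module.End ℂ V := Ring.inverse ((1 : Module.End ℂ V) + LinearMap.adjoint S ∘ₗ S)
  set C : Module.End ℂ W := Ring.inverse ((1 : Module.End ℂ W) + S ∘ₗ LinearMap.adjoint S)
  have hval : gproj S (v, w) - ((0 : V), w) =
      (A v + LinearMap.adjoint S (C w), S (A v) - C w) := by
    simp only [gproj, Prod.ext_iff]
    constructor
    · simp [A, C]
    · simp only [A, C, LinearMap.prod_apply, Prod.mk_sub_mk, LinearMap.add_apply, LinearMap.coe_comp,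
        Function.comp_apply, LinearMap.snd_apply, LinearMap.fst_apply, LinearMap.sub_apply,
        LinearMap.id_coe, id_eq, Function.prod]
      abel
  obtain ⟨hA1, hA2⟩ := hA v
  obtain ⟨hC1, hC2⟩ := hC w
  have hxv : ‖v‖ ≤ ‖(v, w)‖ := norm_fst_le (v, w)
  have hxw : ‖w‖ ≤ ‖(v, w)‖ := norm_snd_le (v, w)
  have hcn : (0:ℝ) < c⁻¹ := by positivity
  have eA1 : ‖A v‖ ≤ c⁻¹ * c⁻¹ * ‖v‖ := by
    rw [show c⁻¹ * c⁻¹ * ‖v‖ = ‖v‖ / (c * c) by field_simp, le_div_iff₀ (by positivity)]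
    nlinarith
  have eA2 : ‖S (A v)‖ ≤ c⁻¹ * ‖v‖ := by
    rw [show c⁻¹ * ‖v‖ = ‖v‖ / c by field_simp, le_div_iff₀ hc]
    nlinarith
  have eC1 : ‖C w‖ ≤ c⁻¹ * c⁻¹ * ‖w‖ := by
    rw [show c⁻¹ * c⁻¹ * ‖w‖ = ‖w‖ / (c * c) by field_simp, le_div_iff₀ (by positivity)]
    nlinarith
  have eC2 : ‖LinearMap.adjoint S (C w)‖ ≤ c⁻¹ * ‖w‖ := by
    rw [show c⁻¹ * ‖w‖ = ‖w‖ / c by field_simp, le_div_iff₀ hc]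
    nlinarith
  rw [hval]
  rw [Prod.norm_def]
  apply max_le
  · calc ‖A v + LinearMap.adjoint S (C w)‖ ≤ ‖A v‖ + ‖LinearMap.adjoint S (C w)‖ :=
        norm_add_le _ _
      _ ≤ c⁻¹ * c⁻¹ * ‖(v, w)‖ + c⁻¹ * ‖(v, w)‖ := by
        apply add_le_add
        · exact eA1.trans (by nlinarith)
        · exact eC2.trans (by nlinarith)
      _ = (c⁻¹ + c⁻¹ * c⁻¹) * ‖(v, w)‖ := by ring
  · calc ‖S (A v) - C w‖ ≤ ‖S (A v)‖ + ‖C w‖ := norm_sub_le _ _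
      _ ≤ c⁻¹ * ‖(v, w)‖ + c⁻¹ * c⁻¹ * ‖(v, w)‖ := by
        apply add_le_add
        · exact eA2.trans (by nlinarith)
        · exact eC1.trans (by nlinarith)
      _ = (c⁻¹ + c⁻¹ * c⁻¹) * ‖(v, w)‖ := by ring

open LinearMap in
lemma exists_lower (T : V →ₗ[ℂ] W) (hT : Function.Bijective T) :
    ∃ c : ℝ, 0 < c ∧ (∀ x, c * ‖x‖ ≤ ‖T x‖) ∧ (∀ y, c * ‖y‖ ≤ ‖LinearMap.adjoint T y‖) := by
  set e := LinearEquiv.ofBijective T hT with he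
  set E := e.toContinuousLinearEquiv with hE
  set M := ‖(E.symm : W →L[ℂ] V)‖ with hM
  have hM0 : 0 ≤ M := norm_nonneg _
  refine ⟨(M + 1)⁻¹, by positivity, ?_, ?_⟩
  · intro x
    have h1 : ‖x‖ ≤ (M + 1) * ‖T x‖ := by
      have h2 : (E.symm : W →L[ℂ] V) (T x) = x := E.symm_apply_apply x
      calc ‖x‖ = ‖(E.symm : W →L[ℂ] V) (T x)‖ := by rw [h2]
        _ ≤ M * ‖T x‖ := ContinuousLinearMap.le_opNorm _ _
        _ ≤ (M + 1) * ‖T x‖ := by nlinarith [norm_nonneg (T x)]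
    rw [inv_mul_le_iff₀ (by positivity)]
    linarith
  · intro y
    obtain ⟨x, rfl⟩ := hT.surjective y
    have hkey : ‖T x‖ ^ 2 = Complex.re (inner ℂ (LinearMap.adjoint T (T x)) x) := by
      rw [LinearMap.adjoint_inner_left]
      simp [← RCLike.re_to_complex, inner_self_eq_norm_sq]
      norm_cast
    have h1 : ‖T x‖ ^ 2 ≤ ‖LinearMap.adjoint T (T x)‖ * ‖x‖ := by
      rw [hkey]
      calc Complex.re (inner ℂ (LinearMap.adjoint T (T x)) x : ℂ)
          ≤ ‖(inner ℂ (LinearMap.adjoint T (T x)) x : ℂ)‖ := Complex.re_le_norm _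
        _ ≤ ‖LinearMap.adjoint T (T x)‖ * ‖x‖ := norm_inner_le_norm _ _
    have h2 : ‖x‖ ≤ (M + 1) * ‖T x‖ := by
      have h2' : (E.symm : W →L[ℂ] V) (T x) = x := E.symm_apply_apply x
      calc ‖x‖ = ‖(E.symm : W →L[ℂ] V) (T x)‖ := by rw [h2']
        _ ≤ M * ‖T x‖ := ContinuousLinearMap.le_opNorm _ _
        _ ≤ (M + 1) * ‖T x‖ := by nlinarith [norm_nonneg (T x)]
    rcases eq_or_lt_of_le (norm_nonneg (T x)) with h | h
    · rw [← h]; simp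
    · rw [inv_mul_le_iff₀ (by positivity)]
      nlinarith [norm_nonneg (LinearMap.adjoint T (T x)), norm_nonneg x]

/-- If `T` is invertible, then as `s → ∞` the graph projections of `sT` converge in
operator norm to the projection `[[0,0],[0,1]]` onto `0 ⊕ W`. -/
theorem graph_projection_tendsto_vertical_of_invertible (T : V →ₗ[ℂ] W)
    (hT : Function.Bijective T) :
    Filter.Tendsto
      (fun s : ℝ => LinearMap.toContinuousLinearMap (gproj ((s : ℂ) • T)))
      Filter.atTop
      (nhds (LinearMap.toContinuousLinearMap
        (LinearMap.prod (0 : (V × W) →ₗ[ℂ] V) (LinearMap.snd ℂ V W)))) := by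
  obtain ⟨c, hc, hTl, hTal⟩ := exists_lower T hT
  have hglim : Filter.Tendsto (fun s : ℝ => (s * c)⁻¹ + (s * c)⁻¹ * (s * c)⁻¹)
      Filter.atTop (nhds 0) := by
    have h : Filter.Tendsto (fun s : ℝ => (s * c)⁻¹) Filter.atTop (nhds 0) :=
      tendsto_inv_atTop_zero.comp (Filter.Tendsto.atTop_mul_const hc Filter.tendsto_id)
    have := h.add (h.mul h)
    simpa using this
  have hdist : Filter.Tendsto (fun s : ℝ =>
      dist (LinearMap.toContinuousLinearMap (gproj ((s : ℂ) • T)))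
        (LinearMap.toContinuousLinearMap
          (LinearMap.prod (0 : (V × W) →ₗ[ℂ] V) (LinearMap.snd ℂ V W))))
      Filter.atTop (nhds 0) := by
    refine squeeze_zero' (Filter.Eventually.of_forall fun s => dist_nonneg) ?_ hglim
    filter_upwards [Filter.eventually_ge_atTop 1] with s hs
    have hde : dist (LinearMap.toContinuousLinearMap (gproj ((s : ℂ) • T)))
        (LinearMap.toContinuousLinearMap
          (LinearMap.prod (0 : (V × W) →ₗ[ℂ] V) (LinearMap.snd ℂ V W)))
        = ‖LinearMap.toContinuousLinearMap (gproj ((s : ℂ) • T)) -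
            LinearMap.toContinuousLinearMap
              (LinearMap.prod (0 : (V × W) →ₗ[ℂ] V) (LinearMap.snd ℂ V W))‖ :=
      by exact dist_eq_norm (E := (V × W) →L[ℂ] (V × W)) _ _
    rw [hde]
    have hs0 : (0:ℝ) < s := lt_of_lt_of_le one_pos hs
    set S : V →ₗ[ℂ] W := (s : ℂ) • T with hSdef
    have hSadj : LinearMap.adjoint S = (s : ℂ) • LinearMap.adjoint T := by
      rw [hSdef, map_smulₛₗ LinearMap.adjoint]
      norm_num
    have hS1 : ∀ x, (s * c) * ‖x‖ ≤ ‖S x‖ := by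
      intro x
      have h1 : ‖S x‖ = s * ‖T x‖ := by
        rw [hSdef]; simp [norm_smul, abs_of_pos hs0]
      rw [h1, mul_assoc]
      exact mul_le_mul_of_nonneg_left (hTl x) hs0.le
    have hS2 : ∀ y, (s * c) * ‖y‖ ≤ ‖LinearMap.adjoint S y‖ := by
      intro y
      have h1 : ‖LinearMap.adjoint S y‖ = s * ‖LinearMap.adjoint T y‖ := by
        rw [hSadj]; simp [norm_smul, abs_of_pos hs0]
      rw [h1, mul_assoc]
      exact mul_le_mul_of_nonneg_left (hTal y) hs0.le
    have key := gproj_sub_bound S (mul_pos hs0 hc) hS1 hS2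
    have hsc0 : (0:ℝ) < s * c := mul_pos hs0 hc
    refine ContinuousLinearMap.opNorm_le_bound _ ?_ ?_
    · have h1 : (0:ℝ) ≤ (s * c)⁻¹ := inv_nonneg.2 hsc0.le
      nlinarith
    · intro x
      have hP : (LinearMap.prod (0 : (V × W) →ₗ[ℂ] V) (LinearMap.snd ℂ V W)) x
          = ((0 : V), x.2) := rfl
      simp only [ContinuousLinearMap.sub_apply, LinearMap.coe_toContinuousLinearMap', hP]
      exact key x

  exact tendsto_iff_dist_tendsto_zero.mpr hdist
end

section
/- Let σ : ℝⁿ → M_m(ℂ) be continuous, homogeneous of degree d > 0 for the anisotropic dilations, and invertible away from 0. Then the matrix-valued functions (1+σ*σ)⁻¹, σ(1+σ*σ)⁻¹, (1+σσ*)⁻¹, and σ*(1+σσ*)⁻¹ all tend to 0 in norm as ρ(ξ) → ∞; i.e., they are C₀ (vanishing at infinity) functions on ℝⁿ. -/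
set_option maxHeartbeats 1000000


open Filter ContinuousLinearMap

section Aux

variable {p q m : ℕ}

local notation "X" => EuclideanSpace ℝ (Fin p) × EuclideanSpace ℝ (Fin q)
local notation "E" => EuclideanSpace ℂ (Fin m)

open scoped InnerProductSpace ComplexConjugate

/-- Reduce a cocompact tendsto-to-zero statement to a norm bound outside big balls. -/
lemma aux_tendsto_of_bound (f : X → (E →L[ℂ] E))
    (h : ∀ ε : ℝ, 0 < ε → ∃ R : ℝ, ∀ ξ : X, R ≤ ‖ξ‖ → ‖f ξ‖ ≤ ε) :
    Tendsto f (cocompact _) (nhds 0) := by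
  rw [Metric.tendsto_nhds]
  intro ε hε
  obtain ⟨R, hR⟩ := h (ε / 2) (by positivity)
  rw [Filter.hasBasis_cocompact.eventually_iff]
  refine ⟨Metric.closedBall 0 R, isCompact_closedBall _ _, fun ξ hξ => ?_⟩
  simp only [Set.mem_compl_iff, Metric.mem_closedBall, dist_zero_right, not_le] at hξ
  have := hR ξ hξ.le
  calc dist (f ξ) 0 = ‖f ξ‖ := by rw [dist_zero_right]
    _ ≤ ε / 2 := this
    _ < ε := by linarith

/-- The quantitative lower bound coming from homogeneity and compactness:
the pointwise inverse of the symbol goes to zero in norm. -/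
lemma aux_inverse_small (d : ℕ) (hd : 0 < d) (σ : X → (E →L[ℂ] E))
    (hcont : Continuous σ)
    (hhom : ∀ t : ℝ, 0 < t → ∀ ξ : X, σ (t • ξ.1, t ^ 2 • ξ.2) = ((t : ℂ) ^ d) • σ ξ)
    (hinv : ∀ ξ : X, ξ ≠ 0 → IsUnit (σ ξ)) :
    ∀ ε : ℝ, 0 < ε → ∃ R : ℝ, 1 ≤ R ∧ ∀ ξ : X, R ≤ ‖ξ‖ → ‖Ring.inverse (σ ξ)‖ ≤ ε := by
  intro ε hε
  -- the compact "sphere"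
  set S : Set X := {ξ | ‖ξ.1‖ ^ 2 + ‖ξ.2‖ ^ 2 = 1} with hS
  have hS0 : ∀ ξ ∈ S, ξ ≠ 0 := by
    rintro ξ hξ rfl
    simp [hS] at hξ
  have hSclosed : IsClosed S :=
    isClosed_eq (by fun_prop) continuous_const
  have hSsub : S ⊆ Metric.closedBall 0 1 := by
    intro ξ hξ
    have h1 : ‖ξ.1‖ ^ 2 ≤ 1 := by
      have := sq_nonneg ‖ξ.2‖; simp only [hS, Set.mem_setOf_eq] at hξ; nlinarith
    have h2 : ‖ξ.2‖ ^ 2 ≤ 1 := by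
      have := sq_nonneg ‖ξ.1‖; simp only [hS, Set.mem_setOf_eq] at hξ; nlinarith
    have h1' : ‖ξ.1‖ ≤ 1 := by nlinarith [norm_nonneg ξ.1]
    have h2' : ‖ξ.2‖ ≤ 1 := by nlinarith [norm_nonneg ξ.2]
    rw [Metric.mem_closedBall, dist_zero_right, Prod.norm_def]
    exact max_le h1' h2'
  have hScpt : IsCompact S :=
    (isCompact_closedBall (0 : X) 1).of_isClosed_subset hSclosed hSsub
  -- bound for inverse on the sphere
  have hcontinv : ContinuousOn (fun ξ => Ring.inverse (σ ξ)) S := by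
    intro ξ hξ
    have hu := hinv ξ (hS0 ξ hξ)
    have : ContinuousAt (fun ξ => Ring.inverse (σ ξ)) ξ := by
      have h1 : ContinuousAt Ring.inverse (σ ξ) := by
        have := NormedRing.inverse_continuousAt hu.unit
        rwa [hu.unit_spec] at this
      exact h1.comp hcont.continuousAt
    exact this.continuousWithinAt
  obtain ⟨C, hC⟩ := hScpt.exists_bound_of_continuousOn hcontinv
  set C' : ℝ := max C 1 with hC'
  have hC'1 : (1 : ℝ) ≤ C' := le_max_right _ _
  have hC'pos : (0 : ℝ) < C' := lt_of_lt_of_le one_pos hC'1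
  refine ⟨max 1 ((C' / ε) ^ 2), le_max_left _ _, fun ξ hξ => ?_⟩
  have hξ1 : (1 : ℝ) ≤ ‖ξ‖ := le_trans (le_max_left _ _) hξ
  have hξR : (C' / ε) ^ 2 ≤ ‖ξ‖ := le_trans (le_max_right _ _) hξ
  have hξne : ξ ≠ 0 := by
    intro h; rw [h, norm_zero] at hξ1; linarith
  -- find t via IVT
  set f : ℝ → ℝ := fun t => t ^ 2 * ‖ξ.1‖ ^ 2 + t ^ 4 * ‖ξ.2‖ ^ 2 with hf
  have hfc : ContinuousOn f (Set.Icc 0 1) := by fun_prop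
  have hf0 : f 0 = 0 := by simp [hf]
  have hf1 : (1 : ℝ) ≤ f 1 := by
    have : ‖ξ‖ ≤ max ‖ξ.1‖ ‖ξ.2‖ := le_of_eq (Prod.norm_def ξ)
    have hmax : (1 : ℝ) ≤ max ‖ξ.1‖ ‖ξ.2‖ := le_trans hξ1 this
    rcases max_cases ‖ξ.1‖ ‖ξ.2‖ with ⟨h, _⟩ | ⟨h, _⟩ <;> rw [h] at hmax <;>
      simp only [hf] <;> nlinarith [sq_nonneg ‖ξ.1‖, sq_nonneg ‖ξ.2‖]
  have h1mem : (1 : ℝ) ∈ Set.Icc (f 0) (f 1) := by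
    rw [hf0]; exact ⟨zero_le_one, hf1⟩
  obtain ⟨t, ht01, hft⟩ := intermediate_value_Icc zero_le_one hfc h1mem
  have ht0 : 0 < t := by
    rcases lt_or_eq_of_le ht01.1 with h | h
    · exact h
    · exfalso; rw [← h] at hft; rw [hf0] at hft; exact one_ne_zero hft.symm
  have ht1 : t ≤ 1 := ht01.2
  have hft' : t ^ 2 * ‖ξ.1‖ ^ 2 + t ^ 4 * ‖ξ.2‖ ^ 2 = 1 := by simpa [hf] using hft
  -- the rescaled point is on the sphere
  set η : X := (t • ξ.1, t ^ 2 • ξ.2) with hη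
  have hηS : η ∈ S := by
    simp only [hS, Set.mem_setOf_eq, hη, norm_smul, Real.norm_eq_abs,
      abs_of_pos ht0, abs_of_pos (pow_pos ht0 2), mul_pow]
    calc t ^ 2 * ‖ξ.1‖ ^ 2 + (t ^ 2) ^ 2 * ‖ξ.2‖ ^ 2
        = t ^ 2 * ‖ξ.1‖ ^ 2 + t ^ 4 * ‖ξ.2‖ ^ 2 := by ring
      _ = 1 := hft
  -- homogeneity relation
  have hrel : σ η = ((t : ℂ) ^ d) • σ ξ := hhom t ht0 ξ
  have htd_ne : ((t : ℂ) ^ d) ≠ 0 := by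
    apply pow_ne_zero
    simpa using ne_of_gt ht0
  have huξ := hinv ξ hξne
  have huη := hinv η (hS0 η hηS)
  -- inverse relation
  have hinv_rel : Ring.inverse (σ ξ) = ((t : ℂ) ^ d) • Ring.inverse (σ η) := by
    have hmul : σ ξ * (((t : ℂ) ^ d) • Ring.inverse (σ η)) = 1 := by
      have : σ ξ = ((t : ℂ) ^ d)⁻¹ • σ η := by
        rw [hrel, smul_smul, inv_mul_cancel₀ htd_ne, one_smul]
      rw [this, smul_mul_smul_comm, inv_mul_cancel₀ htd_ne, one_smul,
        Ring.mul_inverse_cancel _ huη]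
    calc Ring.inverse (σ ξ)
        = Ring.inverse (σ ξ) * (σ ξ * (((t : ℂ) ^ d) • Ring.inverse (σ η))) := by
          rw [hmul, mul_one]
      _ = (Ring.inverse (σ ξ) * σ ξ) * (((t : ℂ) ^ d) • Ring.inverse (σ η)) := by
          rw [mul_assoc]
      _ = ((t : ℂ) ^ d) • Ring.inverse (σ η) := by
          rw [Ring.inverse_mul_cancel _ huξ, one_mul]
  -- the norm estimate
  have hnorm : ‖Ring.inverse (σ ξ)‖ = t ^ d * ‖Ring.inverse (σ η)‖ := by
    rw [hinv_rel]
    rw [norm_smul ((t : ℂ) ^ d) (Ring.inverse (σ η))]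
    congr 1
    rw [norm_pow, Complex.norm_real, Real.norm_eq_abs, abs_of_pos ht0]
  have hbC : ‖Ring.inverse (σ η)‖ ≤ C' := le_trans (hC η hηS) (le_max_left _ _)
  -- bound t
  have htsq : t ^ 2 ≤ (ε / C') ^ 2 := by
    have hx1 : t * ‖ξ.1‖ ≤ 1 := by nlinarith [sq_nonneg (t * ‖ξ.1‖), sq_nonneg (t^2 * ‖ξ.2‖)]
    have hy1 : t ^ 2 * ‖ξ.2‖ ≤ 1 := by
      nlinarith [mul_nonneg (sq_nonneg t) (norm_nonneg ξ.2), sq_nonneg (t * ‖ξ.1‖)]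
    have hmax : t ^ 2 * ‖ξ‖ ≤ 1 := by
      rw [Prod.norm_def]
      rcases max_cases ‖ξ.1‖ ‖ξ.2‖ with ⟨h, _⟩ | ⟨h, _⟩ <;> rw [h]
      · nlinarith [norm_nonneg ξ.1]
      · exact hy1
    have hεC : 0 < (ε / C') ^ 2 := by positivity
    have h1 : t ^ 2 * ((C' / ε) ^ 2) ≤ t ^ 2 * ‖ξ‖ :=
      mul_le_mul_of_nonneg_left hξR (sq_nonneg t)
    have h2 : t ^ 2 * ((C' / ε) ^ 2) ≤ 1 := le_trans h1 hmax
    have h3 : (C' / ε) ^ 2 = ((ε / C') ^ 2)⁻¹ := by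
      rw [div_pow, div_pow, inv_div]
    rw [h3] at h2
    calc t ^ 2 = t ^ 2 * ((ε / C') ^ 2)⁻¹ * (ε / C') ^ 2 := by
          field_simp
      _ ≤ 1 * (ε / C') ^ 2 := mul_le_mul_of_nonneg_right h2 (le_of_lt hεC)
      _ = (ε / C') ^ 2 := one_mul _
  have ht_le : t ≤ ε / C' := by
    have := Real.sqrt_le_sqrt htsq
    rwa [Real.sqrt_sq ht0.le, Real.sqrt_sq (by positivity)] at this
  have htd : t ^ d ≤ t := by
    calc t ^ d ≤ t ^ 1 := pow_le_pow_of_le_one ht0.le ht1 hd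
      _ = t := pow_one t
  calc ‖Ring.inverse (σ ξ)‖ = t ^ d * ‖Ring.inverse (σ η)‖ := hnorm
    _ ≤ t * C' := by
        apply mul_le_mul htd hbC (norm_nonneg _)
        linarith
    _ ≤ (ε / C') * C' := mul_le_mul_of_nonneg_right ht_le hC'pos.le
    _ = ε := by field_simp

/-- Core operator inequality: if `‖v‖ ≤ δ ‖T v‖` for all `v`, then the graph entries
`(1+T*T)⁻¹` and `T(1+T*T)⁻¹` have norm at most `δ²` and `δ`. -/
lemma aux_core (T : E →L[ℂ] E) (δ : ℝ) (hδ : 0 ≤ δ) (h : ∀ v : E, ‖v‖ ≤ δ * ‖T v‖) :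
    ‖Ring.inverse (1 + adjoint T * T)‖ ≤ δ ^ 2 ∧
    ‖T * Ring.inverse (1 + adjoint T * T)‖ ≤ δ := by
  set A : E →L[ℂ] E := 1 + adjoint T * T with hA
  have hkey : ∀ v : E, RCLike.re (inner ℂ (A v) v : ℂ) = ‖v‖ ^ 2 + ‖T v‖ ^ 2 := by
    intro v
    have : (inner ℂ (A v) v : ℂ) = inner ℂ v v + inner ℂ (T v) (T v) := by
      simp only [hA, add_apply, one_apply_eq_self, mul_apply_eq_comp, inner_add_left]
      rw [adjoint_inner_left]
    rw [this, map_add, inner_self_eq_norm_sq, inner_self_eq_norm_sq]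
  -- A is a unit
  have hAunit : IsUnit A := by
    rw [ContinuousLinearMap.isUnit_iff_bijective]
    have hinj : Function.Injective A := by
      intro v w hvw
      have key : ∀ u : E, A u = 0 → u = 0 := by
        intro u hu
        have := hkey u
        rw [hu] at this
        simp only [inner_zero_left, map_zero] at this
        have h1 : ‖u‖ ^ 2 = 0 := by nlinarith [sq_nonneg ‖u‖, sq_nonneg ‖T u‖]
        simpa using (pow_eq_zero_iff (two_ne_zero)).mp h1
      have : A (v - w) = 0 := by rw [map_sub, hvw, sub_self]
      have := key _ this
      rwa [sub_eq_zero] at this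
    refine ⟨hinj, ?_⟩
    have := (LinearMap.injective_iff_surjective (f := (A : E →ₗ[ℂ] E))).mp hinj
    exact this
  -- the two bounds
  have hbound : ∀ u : E, ‖Ring.inverse A u‖ ≤ δ ^ 2 * ‖u‖ ∧
      ‖T (Ring.inverse A u)‖ ≤ δ * ‖u‖ := by
    intro u
    set w : E := Ring.inverse A u with hw
    have hAw : A w = u := by
      have : (A * Ring.inverse A) u = u := by
        rw [Ring.mul_inverse_cancel _ hAunit, one_apply_eq_self]
      rwa [mul_apply_eq_comp] at this
    have h1 : ‖w‖ ^ 2 + ‖T w‖ ^ 2 = RCLike.re (inner ℂ u w : ℂ) := by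
      rw [← hAw, hkey]
    have h2 : RCLike.re (inner ℂ u w : ℂ) ≤ ‖u‖ * ‖w‖ := re_inner_le_norm u w
    have h3 : ‖w‖ ^ 2 ≤ δ ^ 2 * ‖T w‖ ^ 2 := by
      have := h w
      nlinarith [norm_nonneg w, norm_nonneg (T w)]
    have hsum : ‖w‖ ^ 2 + ‖T w‖ ^ 2 ≤ ‖u‖ * ‖w‖ := h1 ▸ h2
    have hw_le : ‖w‖ ≤ δ ^ 2 * ‖u‖ := by
      rcases eq_or_lt_of_le (norm_nonneg w) with hzero | hpos
      · rw [← hzero]; positivity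
      · have hww : ‖w‖ * ‖w‖ ≤ δ ^ 2 * ‖u‖ * ‖w‖ := by
          nlinarith [sq_nonneg ‖T w‖]
        exact le_of_mul_le_mul_right hww hpos
    have hTw_le : ‖T w‖ ≤ δ * ‖u‖ := by
      have hTw2 : ‖T w‖ ^ 2 ≤ (δ * ‖u‖) ^ 2 := by
        nlinarith [sq_nonneg ‖w‖, norm_nonneg w, norm_nonneg u, norm_nonneg (T w)]
      have := Real.sqrt_le_sqrt hTw2
      rwa [Real.sqrt_sq (norm_nonneg _), Real.sqrt_sq (by positivity)] at this
    exact ⟨hw_le, hTw_le⟩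
  constructor
  · exact ContinuousLinearMap.opNorm_le_bound _ (by positivity) fun u => (hbound u).1
  · refine ContinuousLinearMap.opNorm_le_bound _ hδ fun u => ?_
    rw [mul_apply_eq_comp]
    exact (hbound u).2

/-- The pair of tendsto statements for a generic symbol. -/
lemma aux_pair (d : ℕ) (hd : 0 < d) (σ : X → (E →L[ℂ] E))
    (hcont : Continuous σ)
    (hhom : ∀ t : ℝ, 0 < t → ∀ ξ : X, σ (t • ξ.1, t ^ 2 • ξ.2) = ((t : ℂ) ^ d) • σ ξ)
    (hinv : ∀ ξ : X, ξ ≠ 0 → IsUnit (σ ξ)) :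
    Tendsto (fun ξ : X => Ring.inverse (1 + adjoint (σ ξ) * σ ξ))
      (cocompact _) (nhds 0) ∧
    Tendsto (fun ξ : X => σ ξ * Ring.inverse (1 + adjoint (σ ξ) * σ ξ))
      (cocompact _) (nhds 0) := by
  have main : ∀ ε : ℝ, 0 < ε → ∃ R : ℝ, ∀ ξ : X, R ≤ ‖ξ‖ →
      ‖Ring.inverse (1 + adjoint (σ ξ) * σ ξ)‖ ≤ ε ∧
      ‖σ ξ * Ring.inverse (1 + adjoint (σ ξ) * σ ξ)‖ ≤ ε := by
    intro ε hε
    set δ : ℝ := min ε 1 with hδdef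
    have hδpos : 0 < δ := lt_min hε one_pos
    obtain ⟨R, hR1, hR⟩ := aux_inverse_small d hd σ hcont hhom hinv δ hδpos
    refine ⟨R, fun ξ hξ => ?_⟩
    have hξne : ξ ≠ 0 := by
      intro h
      rw [h, norm_zero] at hξ
      linarith
    have hu := hinv ξ hξne
    have hsmall := hR ξ hξ
    have hlow : ∀ v : E, ‖v‖ ≤ δ * ‖σ ξ v‖ := by
      intro v
      have hid : Ring.inverse (σ ξ) (σ ξ v) = v := by
        have : (Ring.inverse (σ ξ) * σ ξ) v = v := by
          rw [Ring.inverse_mul_cancel _ hu, one_apply_eq_self]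
        rwa [mul_apply_eq_comp] at this
      calc ‖v‖ = ‖Ring.inverse (σ ξ) (σ ξ v)‖ := by rw [hid]
        _ ≤ ‖Ring.inverse (σ ξ)‖ * ‖σ ξ v‖ := le_opNorm _ _
        _ ≤ δ * ‖σ ξ v‖ := mul_le_mul_of_nonneg_right hsmall (norm_nonneg _)
    obtain ⟨hb1, hb2⟩ := aux_core (σ ξ) δ hδpos.le hlow
    have hδε : δ ≤ ε := min_le_left _ _
    have hδ1 : δ ≤ 1 := min_le_right _ _
    constructor
    · calc ‖Ring.inverse (1 + adjoint (σ ξ) * σ ξ)‖ ≤ δ ^ 2 := hb1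
        _ ≤ δ := by nlinarith
        _ ≤ ε := hδε
    · exact le_trans hb2 hδε
  constructor
  · exact aux_tendsto_of_bound _ fun ε hε => (main ε hε).imp fun R hR ξ hξ => (hR ξ hξ).1
  · exact aux_tendsto_of_bound _ fun ε hε => (main ε hε).imp fun R hR ξ hξ => (hR ξ hξ).2

end Aux

/-- For a continuous symbol `σ`, anisotropically homogeneous of degree `d > 0` and invertible
away from `0`, the functions `(1+σ*σ)⁻¹`, `σ(1+σ*σ)⁻¹`, `(1+σσ*)⁻¹` and `σ*(1+σσ*)⁻¹`
all vanish at infinity. -/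
theorem symbol_graph_entries_zero_at_infty (p q m d : ℕ) (hd : 0 < d)
    (σ : EuclideanSpace ℝ (Fin p) × EuclideanSpace ℝ (Fin q) →
      (EuclideanSpace ℂ (Fin m) →L[ℂ] EuclideanSpace ℂ (Fin m)))
    (hcont : Continuous σ)
    (hhom : ∀ t : ℝ, 0 < t → ∀ ξ, σ (t • ξ.1, t ^ 2 • ξ.2) = ((t : ℂ) ^ d) • σ ξ)
    (hinv : ∀ ξ, ξ ≠ 0 → IsUnit (σ ξ)) :
    Tendsto (fun ξ => Ring.inverse (1 + adjoint (σ ξ) * σ ξ))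
      (cocompact _) (nhds 0) ∧
    Tendsto (fun ξ => σ ξ * Ring.inverse (1 + adjoint (σ ξ) * σ ξ))
      (cocompact _) (nhds 0) ∧
    Tendsto (fun ξ => Ring.inverse (1 + σ ξ * adjoint (σ ξ)))
      (cocompact _) (nhds 0) ∧
    Tendsto (fun ξ => adjoint (σ ξ) * Ring.inverse (1 + σ ξ * adjoint (σ ξ)))
      (cocompact _) (nhds 0) := by
  obtain ⟨h1, h2⟩ := aux_pair d hd σ hcont hhom hinv
  -- apply the same result to the adjoint symbol
  have hcont' : Continuous fun ξ => adjoint (σ ξ) := by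
    simp only [← star_eq_adjoint]
    exact continuous_star.comp hcont
  have hhom' : ∀ t : ℝ, 0 < t → ∀ ξ,
      adjoint (σ (t • ξ.1, t ^ 2 • ξ.2)) = ((t : ℂ) ^ d) • adjoint (σ ξ) := by
    intro t ht ξ
    rw [hhom t ht ξ, ← star_eq_adjoint, ← star_eq_adjoint, star_smul]
    congr 1
    rw [← Complex.ofReal_pow]
    simp [Complex.conj_ofReal]
  have hinv' : ∀ ξ, ξ ≠ 0 → IsUnit (adjoint (σ ξ)) := by
    intro ξ hξ
    rw [← star_eq_adjoint]
    exact (hinv ξ hξ).star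
  obtain ⟨h3, h4⟩ := aux_pair d hd (fun ξ => adjoint (σ ξ)) hcont' hhom' hinv'
  simp only [adjoint_adjoint] at h3 h4
  exact ⟨h1, h2, h3, h4⟩
end

section
/- Let P : H₁ → H₂ be a closed densely defined operator between Hilbert spaces such that (1+P*P)⁻¹ and (1+PP*)⁻¹ are both compact. Then P is Fredholm: ker P and ker P* are finite-dimensional and the range of P is closed. -/
open LinearPMap ComplexConjugate

local notation "⟪" x ", " y "⟫" => @inner ℂ _ _ x y

/-- If a sum of two inner-squares vanishes, the second vector vanishes. -/
lemma aux_inner_add_eq_zero {E F : Type*} [NormedAddCommGroup E] [InnerProductSpace ℂ E]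
    [NormedAddCommGroup F] [InnerProductSpace ℂ F] {y : E} {z : F}
    (h : ⟪y, y⟫ + ⟪z, z⟫ = 0) : z = 0 := by
  rw [inner_self_eq_norm_sq_to_K, inner_self_eq_norm_sq_to_K] at h
  have h2 : (‖y‖ ^ 2 + ‖z‖ ^ 2 : ℝ) = 0 := by
    have h' : ((‖y‖ ^ 2 + ‖z‖ ^ 2 : ℝ) : ℂ) = 0 := by push_cast; exact h
    exact_mod_cast h'
  have h3 : ‖z‖ = 0 := by nlinarith [norm_nonneg y, norm_nonneg z, sq_nonneg ‖y‖]
  exact norm_eq_zero.1 h3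

open Metric Filter Topology

/-- Riesz: a closed subspace pointwise-fixed by a compact operator is finite dimensional. -/
lemma aux_findim_fixed {H : Type*} [NormedAddCommGroup H] [NormedSpace ℂ H]
    (T : H →L[ℂ] H) (hT : IsCompactOperator (T : H → H))
    (K : Submodule ℂ H) (hKc : IsClosed (K : Set H))
    (hfix : ∀ x ∈ K, T x = x) : FiniteDimensional ℂ K := by
  obtain ⟨C, hCcpt, hC⟩ := hT.image_closedBall_subset_compact 1
  have h1 : IsCompact ((K : Set H) ∩ closedBall 0 1) := by
    refine hCcpt.of_isClosed_subset (hKc.inter isClosed_closedBall) ?_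
    rintro x ⟨hxK, hxb⟩
    have : T x ∈ C := hC ⟨x, hxb, rfl⟩
    rwa [hfix x hxK] at this
  have h2 : (Subtype.val '' (closedBall (0 : K) 1)) = (K : Set H) ∩ closedBall 0 1 := by
    ext x
    constructor
    · rintro ⟨y, hy, rfl⟩
      refine ⟨y.2, ?_⟩
      simpa [mem_closedBall, dist_eq_norm] using hy
    · rintro ⟨hxK, hxb⟩
      refine ⟨⟨x, hxK⟩, ?_, rfl⟩
      simpa [mem_closedBall, dist_eq_norm] using hxb
  have h3 : IsCompact (closedBall (0 : K) 1) := by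
    rw [Topology.IsEmbedding.isCompact_iff Topology.IsEmbedding.subtypeVal, h2]
    exact h1
  exact FiniteDimensional.of_isCompact_closedBall₀ ℂ one_pos h3

open Metric Filter Topology

/-- Riesz: `1 - T` has closed range for a compact operator `T` on a Hilbert space. -/
lemma aux_closed_range {H : Type*} [NormedAddCommGroup H] [InnerProductSpace ℂ H]
    [CompleteSpace H] (T : H →L[ℂ] H) (hT : IsCompactOperator (T : H → H)) :
    IsClosed ((LinearMap.range ((1 - T : H →L[ℂ] H) : H →ₗ[ℂ] H) : Submodule ℂ H) : Set H) := by
  set A : H →L[ℂ] H := 1 - T with hA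
  have hAapp : ∀ x : H, A x = x - T x := by
    intro x; simp [hA]
  set K : Submodule ℂ H := LinearMap.ker (A : H →ₗ[ℂ] H) with hK
  have hKc : IsClosed (K : Set H) := ContinuousLinearMap.isClosed_ker A
  haveI : CompleteSpace K := hKc.completeSpace_coe
  -- bounded below on Kᗮ
  have hbb : ∃ c : ℝ, 0 < c ∧ ∀ x ∈ Kᗮ, c * ‖x‖ ≤ ‖A x‖ := by
    by_contra h
    push_neg at h
    have hseq : ∀ n : ℕ, ∃ u : H, u ∈ Kᗮ ∧ ‖u‖ = 1 ∧ ‖A u‖ < 1 / (n + 1) := by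
      intro n
      obtain ⟨x, hxK, hx⟩ := h (1 / (n + 1)) (by positivity)
      have hx0 : x ≠ 0 := by
        rintro rfl
        simp at hx
      have hxn : (0:ℝ) < ‖x‖ := norm_pos_iff.2 hx0
      refine ⟨(‖x‖ : ℂ)⁻¹ • x, Kᗮ.smul_mem _ hxK, ?_, ?_⟩
      · rw [norm_smul, norm_inv]
        simp only [Complex.norm_real, norm_norm]
        field_simp
      · rw [_root_.map_smul, norm_smul, norm_inv]
        simp only [Complex.norm_real, norm_norm]
        rw [inv_mul_lt_iff₀ hxn]
        calc ‖A x‖ < 1 / (↑n + 1) * ‖x‖ := hx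
          _ = ‖x‖ * (1 / (↑n + 1)) := by ring
    choose u hu1 hu2 hu3 using hseq
    obtain ⟨C, hCcpt, hC⟩ := hT.image_closedBall_subset_compact 1
    have hmem : ∀ n, T (u n) ∈ C := fun n =>
      hC ⟨u n, by simp [mem_closedBall, dist_eq_norm, hu2 n], rfl⟩
    obtain ⟨v, hvC, φ, hφ, hconv⟩ := hCcpt.tendsto_subseq hmem
    have hA0 : Tendsto (fun n => A (u (φ n))) atTop (𝓝 0) := by
      rw [tendsto_zero_iff_norm_tendsto_zero]
      have hb : ∀ n : ℕ, ‖A (u (φ n))‖ ≤ 1 / ((φ n : ℝ) + 1) := fun n => (hu3 (φ n)).le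
      have h1 : Tendsto (fun n : ℕ => 1 / ((n : ℝ) + 1)) atTop (𝓝 0) :=
        tendsto_one_div_add_atTop_nhds_zero_nat
      exact squeeze_zero (fun n => norm_nonneg _) hb (h1.comp hφ.tendsto_atTop)
    have huv : Tendsto (fun n => u (φ n)) atTop (𝓝 v) := by
      have heq : ∀ n, u (φ n) = A (u (φ n)) + T (u (φ n)) := by
        intro n; rw [hAapp]; abel
      have := hA0.add hconv
      rw [zero_add] at this
      exact this.congr (fun n => (heq n).symm)
    have hvK : v ∈ K := by
      have h1 : Tendsto (fun n => A (u (φ n))) atTop (𝓝 (A v)) :=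
        (A.continuous.tendsto v).comp huv
      have : A v = 0 := tendsto_nhds_unique h1 hA0
      exact LinearMap.mem_ker.2 this
    have hvKo : v ∈ Kᗮ := by
      have : IsClosed ((Kᗮ : Submodule ℂ H) : Set H) := Submodule.isClosed_orthogonal K
      exact this.mem_of_tendsto huv (Filter.Eventually.of_forall fun n => hu1 (φ n))
    have hv1 : ‖v‖ = 1 := by
      have h1 : Tendsto (fun n => ‖u (φ n)‖) atTop (𝓝 ‖v‖) := huv.norm
      have h2 : Tendsto (fun _ : ℕ => (1:ℝ)) atTop (𝓝 1) := tendsto_const_nhds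
      exact (tendsto_nhds_unique (h1.congr (fun n => (hu2 (φ n)))) h2)
    have : v = 0 := by
      have := hvKo v hvK
      rwa [inner_self_eq_zero] at this
    rw [this, norm_zero] at hv1
    norm_num at hv1
  obtain ⟨c, hc, hineq⟩ := hbb
  -- closedness of the range via sequences
  refine IsSeqClosed.isClosed ?_
  intro yn y hyn hy
  choose x hx using hyn
  set x' : ℕ → H := fun n => x n - (K.subtypeL.comp K.orthogonalProjection) (x n) with hx'
  have hx'o : ∀ n, x' n ∈ Kᗮ := fun n => Submodule.sub_starProjection_mem_orthogonal (K := K) (x n)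
  have hAx' : ∀ n, A (x' n) = yn n := by
    intro n
    have hker : A ((K.subtypeL.comp K.orthogonalProjection) (x n)) = 0 := by
      have : ((K.subtypeL.comp K.orthogonalProjection) (x n)) ∈ K :=
        (K.orthogonalProjection (x n)).2
      exact this
    rw [hx']
    simp only [_root_.map_sub, hker, sub_zero]
    exact hx n
  have hyC : CauchySeq yn := hy.cauchySeq
  have hCx : CauchySeq x' := by
    rw [Metric.cauchySeq_iff] at hyC ⊢
    intro ε hε
    obtain ⟨N, hN⟩ := hyC (c * ε) (by positivity)
    refine ⟨N, fun m hm n hn => ?_⟩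
    have hmem : x' m - x' n ∈ Kᗮ := Kᗮ.sub_mem (hx'o m) (hx'o n)
    have h1 : c * ‖x' m - x' n‖ ≤ ‖A (x' m - x' n)‖ := hineq _ hmem
    rw [_root_.map_sub, hAx', hAx'] at h1
    have h2 : dist (yn m) (yn n) < c * ε := hN m hm n hn
    rw [dist_eq_norm] at h2 ⊢
    nlinarith [norm_nonneg (x' m - x' n)]
  obtain ⟨xl, hxl⟩ := cauchySeq_tendsto_of_complete hCx
  refine ⟨xl, ?_⟩
  have h1 : Tendsto (fun n => A (x' n)) atTop (𝓝 (A xl)) := (A.continuous.tendsto xl).comp hxl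
  have h2 : Tendsto yn atTop (𝓝 (A xl)) := h1.congr (fun n => hAx' n)
  exact tendsto_nhds_unique h2 hy

/-- A closed densely defined operator `P` between Hilbert spaces whose resolvent-type operators
`R = (1+P*P)⁻¹` and `R' = (1+PP*)⁻¹` are compact is Fredholm: `ker P` and `ker P*` are
finite-dimensional and the range of `P` is closed. The inverses are encoded via the graphs:
`R x ∈ dom P`, `P(Rx) ∈ dom P*` and `(1 + P*P)(Rx) = x`, and symmetrically for `R'`. -/
theorem fredholm_of_compact_resolvents {H₁ H₂ : Type*}
    [NormedAddCommGroup H₁] [InnerProductSpace ℂ H₁] [CompleteSpace H₁]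
    [NormedAddCommGroup H₂] [InnerProductSpace ℂ H₂] [CompleteSpace H₂]
    (P : H₁ →ₗ.[ℂ] H₂)
    (hdense : Dense (P.domain : Set H₁))
    (hclosed : IsClosed (P.graph : Set (H₁ × H₂)))
    (R : H₁ →L[ℂ] H₁) (R' : H₂ →L[ℂ] H₂)
    (hRcpt : IsCompactOperator R) (hR'cpt : IsCompactOperator R')
    (hR : ∀ x : H₁, ∃ y : H₂, ∃ z : H₁,
      (R x, y) ∈ P.graph ∧ (y, z) ∈ P.adjoint.graph ∧ R x + z = x)
    (hR' : ∀ w : H₂, ∃ y : H₁, ∃ z : H₂,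
      (R' w, y) ∈ P.adjoint.graph ∧ (y, z) ∈ P.graph ∧ R' w + z = w) :
    FiniteDimensional ℂ (LinearMap.ker P.toFun) ∧
    FiniteDimensional ℂ (LinearMap.ker P.adjoint.toFun) ∧
    IsClosed (LinearMap.range P.toFun : Set H₂) := by
  have hadj := LinearPMap.adjoint_isFormalAdjoint hdense
  -- The fundamental pairing identity, extracted from graph membership.
  have pair : ∀ {y : H₂} {z : H₁}, (y, z) ∈ P.adjoint.graph →
      ∀ u : P.domain, ⟪z, (u : H₁)⟫ = ⟪y, P u⟫ := by
    intro y z hyz u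
    rcases (LinearPMap.mem_graph_iff _).1 hyz with ⟨w, hw1, hw2⟩
    simp only at hw1 hw2
    rw [← hw1, ← hw2]
    exact hadj w u
  -- Elements of `ker P` are fixed by `R`.
  have hfixP : ∀ x : P.domain, P x = 0 → R ↑x = ↑x := by
    intro x hx
    obtain ⟨y, z, hg1, hg2, hsum⟩ := hR ↑x
    obtain ⟨u, hu1, hu2⟩ := (LinearPMap.mem_graph_iff _).1 hg1
    simp only at hu1 hu2
    have e1 : ⟪z, (x : H₁)⟫ = 0 := by rw [pair hg2 x, hx, inner_zero_right]
    have e2 : ⟪z, (u : H₁)⟫ = ⟪y, y⟫ := by rw [pair hg2 u, hu2]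
    have e4 : ⟪y, y⟫ + ⟪z, z⟫ = 0 := by
      calc ⟪y, y⟫ + ⟪z, z⟫ = ⟪z, (u : H₁)⟫ + ⟪z, z⟫ := by rw [e2]
        _ = ⟪z, R ↑x⟫ + ⟪z, z⟫ := by rw [hu1]
        _ = ⟪z, R ↑x + z⟫ := (inner_add_right _ _ _).symm
        _ = ⟪z, (x : H₁)⟫ := by rw [hsum]
        _ = 0 := e1
    have hz : z = 0 := aux_inner_add_eq_zero e4
    simpa [hz] using hsum
  -- Elements of `ker P†` are fixed by `R'`.
  have hfixP' : ∀ w : P.adjoint.domain, P.adjoint w = 0 → R' ↑w = ↑w := by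
    intro w hw
    obtain ⟨y, z, hg1, hg2, hsum⟩ := hR' ↑w
    obtain ⟨u, hu1, hu2⟩ := (LinearPMap.mem_graph_iff _).1 hg2
    simp only at hu1 hu2
    have hwg : ((w : H₂), (0 : H₁)) ∈ P.adjoint.graph := by
      have := P.adjoint.mem_graph w
      rwa [hw] at this
    have e1 : ⟪z, (w : H₂)⟫ = 0 := by
      have h0 : ⟪(w : H₂), P u⟫ = (0 : ℂ) := by
        rw [← pair hwg u, inner_zero_left]
      calc ⟪z, (w : H₂)⟫ = conj ⟪(w : H₂), z⟫ := (inner_conj_symm _ _).symm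
        _ = conj ⟪(w : H₂), P u⟫ := by rw [hu2]
        _ = 0 := by rw [h0, _root_.map_zero]
    have e2 : ⟪z, R' ↑w⟫ = ⟪y, y⟫ := by
      have h1 := pair hg1 u
      calc ⟪z, R' ↑w⟫ = conj ⟪R' ↑w, z⟫ := (inner_conj_symm _ _).symm
        _ = conj ⟪R' ↑w, P u⟫ := by rw [hu2]
        _ = conj ⟪y, (u : H₁)⟫ := by rw [← h1]
        _ = ⟪(u : H₁), y⟫ := inner_conj_symm _ _
        _ = ⟪y, y⟫ := by rw [hu1]
    have e4 : ⟪y, y⟫ + ⟪z, z⟫ = 0 := by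
      calc ⟪y, y⟫ + ⟪z, z⟫ = ⟪z, R' ↑w⟫ + ⟪z, z⟫ := by rw [e2]
        _ = ⟪z, R' ↑w + z⟫ := (inner_add_right _ _ _).symm
        _ = ⟪z, (w : H₂)⟫ := by rw [hsum]
        _ = 0 := e1
    have hz : z = 0 := aux_inner_add_eq_zero e4
    simpa [hz] using hsum
  -- data from `hR'`
  choose Y Z hg1 hg2 hg3 using hR'
  -- `R'` is self-adjoint.
  have key : ∀ a b : H₂, ⟪R' a, b⟫ = ⟪R' a, R' b⟫ + ⟪Y a, Y b⟫ := by
    intro a b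
    obtain ⟨u, hu1, hu2⟩ := (LinearPMap.mem_graph_iff _).1 (hg2 b)
    simp only at hu1 hu2
    have h1 := pair (hg1 a) u
    calc ⟪R' a, b⟫ = ⟪R' a, R' b + Z b⟫ := by rw [hg3 b]
      _ = ⟪R' a, R' b⟫ + ⟪R' a, Z b⟫ := inner_add_right _ _ _
      _ = ⟪R' a, R' b⟫ + ⟪R' a, P u⟫ := by rw [hu2]
      _ = ⟪R' a, R' b⟫ + ⟪Y a, (u : H₁)⟫ := by rw [h1]
      _ = ⟪R' a, R' b⟫ + ⟪Y a, Y b⟫ := by rw [hu1]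
  have hR'sa : ∀ a b : H₂, ⟪R' a, b⟫ = ⟪a, R' b⟫ := by
    intro a b
    calc ⟪R' a, b⟫ = ⟪R' a, R' b⟫ + ⟪Y a, Y b⟫ := key a b
      _ = conj (⟪R' b, R' a⟫ + ⟪Y b, Y a⟫) := by
          rw [_root_.map_add, inner_conj_symm, inner_conj_symm]
      _ = conj ⟪R' b, a⟫ := by rw [← key b a]
      _ = ⟪a, R' b⟫ := inner_conj_symm _ _
  -- Fixed points of `R'` are orthogonal to the range of `P`.
  have horth : ∀ v : H₂, R' v = v → ∀ u : P.domain, ⟪v, P u⟫ = 0 := by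
    intro v hv u
    have hgv : (v, Y v) ∈ P.adjoint.graph := by
      have := hg1 v; rwa [hv] at this
    have hzv : Z v = 0 := by
      have := hg3 v; rw [hv] at this
      exact add_eq_left.1 this
    obtain ⟨u₀, hu01, hu02⟩ := (LinearPMap.mem_graph_iff _).1 (hg2 v)
    simp only at hu01 hu02
    have hY0 : Y v = 0 := by
      have h1 := pair hgv u₀
      rw [hu01, hu02, hzv, inner_zero_right] at h1
      exact inner_self_eq_zero.1 h1
    have h2 := pair hgv u
    rw [hY0, inner_zero_left] at h2
    exact h2.symm
  refine ⟨?_, ?_, ?_⟩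
  · -- ker P is finite dimensional
    have hK1closed : IsClosed ((LinearMap.ker ((1 - R : H₁ →L[ℂ] H₁) : H₁ →ₗ[ℂ] H₁) : Submodule ℂ H₁) : Set H₁) :=
      ContinuousLinearMap.isClosed_ker (1 - R)
    have hfd1 : FiniteDimensional ℂ (LinearMap.ker ((1 - R : H₁ →L[ℂ] H₁) : H₁ →ₗ[ℂ] H₁)) := by
      refine aux_findim_fixed R hRcpt _ hK1closed ?_
      intro x hx
      have h1 : (1 - R) x = 0 := hx
      have h2 : x - R x = 0 := by simpa using h1
      exact (sub_eq_zero.1 h2).symm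
    let g : LinearMap.ker P.toFun →ₗ[ℂ] H₁ :=
      P.domain.subtype.comp (LinearMap.ker P.toFun).subtype
    have hmem : ∀ x : LinearMap.ker P.toFun, g x ∈ LinearMap.ker ((1 - R : H₁ →L[ℂ] H₁) : H₁ →ₗ[ℂ] H₁) := by
      intro x
      have hx : P x.1 = 0 := x.2
      have h1 := hfixP x.1 hx
      have : (1 - R) ((x : P.domain) : H₁) = 0 := by
        simp [ContinuousLinearMap.sub_apply, h1]
      exact this
    have hinj : Function.Injective (g.codRestrict _ hmem) := by
      intro a b hab
      have h2 : ((a : P.domain) : H₁) = ((b : P.domain) : H₁) :=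
        congrArg (fun t : ↥(LinearMap.ker ((1 - R : H₁ →L[ℂ] H₁) : H₁ →ₗ[ℂ] H₁)) => (t : H₁)) hab
      exact Subtype.ext (Subtype.ext h2)
    exact FiniteDimensional.of_injective (g.codRestrict _ hmem) hinj
  · -- ker P† is finite dimensional
    have hK2closed : IsClosed ((LinearMap.ker ((1 - R' : H₂ →L[ℂ] H₂) : H₂ →ₗ[ℂ] H₂) : Submodule ℂ H₂) : Set H₂) :=
      ContinuousLinearMap.isClosed_ker (1 - R')
    have hfd2 : FiniteDimensional ℂ (LinearMap.ker ((1 - R' : H₂ →L[ℂ] H₂) : H₂ →ₗ[ℂ] H₂)) := by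
      refine aux_findim_fixed R' hR'cpt _ hK2closed ?_
      intro x hx
      have h1 : (1 - R') x = 0 := hx
      have h2 : x - R' x = 0 := by simpa using h1
      exact (sub_eq_zero.1 h2).symm
    let g : LinearMap.ker P.adjoint.toFun →ₗ[ℂ] H₂ :=
      P.adjoint.domain.subtype.comp (LinearMap.ker P.adjoint.toFun).subtype
    have hmem : ∀ x : LinearMap.ker P.adjoint.toFun,
        g x ∈ LinearMap.ker ((1 - R' : H₂ →L[ℂ] H₂) : H₂ →ₗ[ℂ] H₂) := by
      intro x
      have hx : P.adjoint x.1 = 0 := x.2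
      have h1 := hfixP' x.1 hx
      have : (1 - R') ((x : P.adjoint.domain) : H₂) = 0 := by
        simp [ContinuousLinearMap.sub_apply, h1]
      exact this
    have hinj : Function.Injective (g.codRestrict _ hmem) := by
      intro a b hab
      have h2 : ((a : P.adjoint.domain) : H₂) = ((b : P.adjoint.domain) : H₂) :=
        congrArg (fun t : ↥(LinearMap.ker ((1 - R' : H₂ →L[ℂ] H₂) : H₂ →ₗ[ℂ] H₂)) => (t : H₂)) hab
      exact Subtype.ext (Subtype.ext h2)
    exact FiniteDimensional.of_injective (g.codRestrict _ hmem) hinj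
  · -- the range of P is closed
    have hMclosed := aux_closed_range R' hR'cpt
    set A : H₂ →L[ℂ] H₂ := 1 - R' with hAdef
    have hAapp : ∀ v, A v = v - R' v := fun v => by simp [hAdef]
    set M : Submodule ℂ H₂ := LinearMap.range (A : H₂ →ₗ[ℂ] H₂) with hM
    haveI : CompleteSpace M := hMclosed.completeSpace_coe
    have hsub1 : LinearMap.range P.toFun ≤ M := by
      rintro b ⟨u, rfl⟩
      rw [← Submodule.orthogonal_orthogonal M, Submodule.mem_orthogonal]
      intro v hv
      have hv' : ∀ w : H₂, ⟪A w, v⟫ = 0 := fun w =>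
        (Submodule.mem_orthogonal M v).1 hv (A w) ⟨w, rfl⟩
      have hvfix : R' v = v := by
        have hdiff : ∀ w : H₂, ⟪w, v - R' v⟫ = 0 := by
          intro w
          calc ⟪w, v - R' v⟫ = ⟪w, v⟫ - ⟪w, R' v⟫ := inner_sub_right _ _ _
            _ = ⟪w, v⟫ - ⟪R' w, v⟫ := by rw [hR'sa]
            _ = ⟪w - R' w, v⟫ := (inner_sub_left _ _ _).symm
            _ = ⟪A w, v⟫ := by rw [hAapp]
            _ = 0 := hv' w
        have h0 : v - R' v = 0 := inner_self_eq_zero.1 (hdiff (v - R' v))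
        exact (sub_eq_zero.1 h0).symm
      exact horth v hvfix u
    have hsub2 : M ≤ LinearMap.range P.toFun := by
      rintro b ⟨v, rfl⟩
      obtain ⟨u, hu1, hu2⟩ := (LinearPMap.mem_graph_iff _).1 (hg2 v)
      simp only at hu1 hu2
      refine ⟨u, ?_⟩
      have hZv : Z v = A v := by
        rw [hAapp]
        have := hg3 v
        exact eq_sub_of_add_eq' this
      exact hu2.trans hZv
    have heq : LinearMap.range P.toFun = M := le_antisymm hsub1 hsub2
    rw [heq]
    exact hMclosed
end
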